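/- Let E ⊆ G be a Borel subset of the Cantor dyadic group and 0 < s < 1. If there exists a nonzero finite nonatomic Borel measure μ supported on E such that the series Σ_{k=0}^∞ \hatφ_s(k) (\hatμ(k))^2 converges, then the Hausdorff dimension of E (in the metric ρ) is at least s. -/

import Mathlib

open MeasureTheory Filter Topology
open scoped ENNReal Classical

/-- The Cantor dyadic group: sequences of 0s and 1s with coordinatewise addition mod 2. -/
abbrev G : Type := ℕ → ZMod 2

/-- The metric ρ(x,y) = ∑_{i=1}^∞ 2^{-i} |x_i - y_i| (coordinates indexed from 0 here). -/
noncomputable def rho (x y : G) : ℝ :=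
  ∑' i : ℕ, (2:ℝ) ^ (-(i:ℝ) - 1) * (if x i = y i then 0 else 1)

/-- The subgroup G_n of sequences vanishing in the first n coordinates. -/
def Gset (n : ℕ) : Set G := {x | ∀ i < n, x i = 0}

/-- The coset K_n(x) = x + G_n of G_n containing x. -/
def Kset (n : ℕ) (x : G) : Set G := {y | x - y ∈ Gset n}

/-- The k-th Walsh function. -/
def walsh (k : ℕ) (x : G) : ℝ :=
  ∏ i ∈ Finset.range k, if k.testBit i ∧ x i = 1 then (-1 : ℝ) else 1

/-- The s-kernel: φ_s(0) = 0 and φ_s(x) = 2^{s(n-1)} for x ∈ G_{n-1} \ G_n,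
i.e. 2^{s j} where j is the first nonzero coordinate of x. -/
noncomputable def kernel (s : ℝ) (x : G) : ℝ :=
  if h : ∃ i, x i ≠ 0 then (2:ℝ) ^ (s * (Nat.find h : ℝ)) else 0

/-- The truncated s-kernel φ_s^n. -/
noncomputable def kernelTrunc (s : ℝ) (n : ℕ) (x : G) : ℝ :=
  if x = 0 then 0 else if x ∈ Gset n then (2:ℝ) ^ (s * (n:ℝ)) else kernel s x

/-- Walsh–Fourier coefficient of the s-kernel w.r.t. a (Haar) measure lam. -/
noncomputable def phiHat (s : ℝ) (lam : Measure G) (k : ℕ) : ℝ :=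
  ∫ x, kernel s x * walsh k x ∂lam

/-- Walsh–Fourier coefficient of the truncated s-kernel. -/
noncomputable def phiHatTrunc (s : ℝ) (n : ℕ) (lam : Measure G) (k : ℕ) : ℝ :=
  ∫ x, kernelTrunc s n x * walsh k x ∂lam

/-- Walsh–Fourier coefficient of a measure μ. -/
noncomputable def muHat (μ : Measure G) (k : ℕ) : ℝ :=
  ∫ x, walsh k x ∂μ

/-- s-potential of μ at x. -/
noncomputable def potential (s : ℝ) (μ : Measure G) (x : G) : ℝ≥0∞ :=
  ∫⁻ y, ENNReal.ofReal (kernel s (x - y)) ∂μ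

/-- s-energy of μ. -/
noncomputable def energy (s : ℝ) (μ : Measure G) : ℝ≥0∞ :=
  ∫⁻ x, ∫⁻ y, ENNReal.ofReal (kernel s (x - y)) ∂μ ∂μ

/-- truncated s-energy of μ. -/
noncomputable def energyTrunc (s : ℝ) (n : ℕ) (μ : Measure G) : ℝ≥0∞ :=
  ∫⁻ x, ∫⁻ y, ENNReal.ofReal (kernelTrunc s n (x - y)) ∂μ ∂μ

/-- Diameter of a set in the metric ρ, valued in ℝ≥0∞. -/
noncomputable def diamRho (I : Set G) : ℝ≥0∞ :=
  ⨆ x ∈ I, ⨆ y ∈ I, ENNReal.ofReal (rho x y)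

/-- Pre-Hausdorff measure H^s_δ via countable covers of ρ-diameter < δ. -/
noncomputable def Hdelta (s : ℝ) (δ : ℝ≥0∞) (A : Set G) : ℝ≥0∞ :=
  ⨅ (I : ℕ → Set G) (_ : A ⊆ ⋃ i, I i) (_ : ∀ i, diamRho (I i) < δ),
    ∑' i, diamRho (I i) ^ s

/-- s-dimensional Hausdorff measure w.r.t. the metric ρ. -/
noncomputable def Hmeas (s : ℝ) (A : Set G) : ℝ≥0∞ :=
  ⨆ (δ : ℝ≥0∞) (_ : 0 < δ), Hdelta s δ A

/-- Hausdorff dimension w.r.t. the metric ρ. -/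
noncomputable def hdimRho (A : Set G) : ℝ≥0∞ :=
  ⨆ (t : ℝ) (_ : Hmeas t A = ⊤), ENNReal.ofReal t


-- basic group facts
lemma zmod2_cases (a : ZMod 2) : a = 0 ∨ a = 1 := by
  revert a; decide

lemma ite_zmod_mul (a b : ZMod 2) : (if a + b = 1 then (-1:ℝ) else 1)
    = (if a = 1 then (-1:ℝ) else 1) * (if b = 1 then (-1:ℝ) else 1) := by
  rcases zmod2_cases a with ha | ha <;> rcases zmod2_cases b with hb | hb <;>
    subst ha <;> subst hb
  · rw [if_neg (by decide : ¬((0:ZMod 2) + 0 = 1)), if_neg (by decide : ¬((0:ZMod 2) = 1))]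
    norm_num
  · rw [if_pos (by decide : ((0:ZMod 2) + 1 = 1)), if_neg (by decide : ¬((0:ZMod 2) = 1)),
      if_pos (rfl : (1:ZMod 2) = 1)]
    norm_num
  · rw [if_pos (by decide : ((1:ZMod 2) + 0 = 1)), if_pos (rfl : (1:ZMod 2) = 1),
      if_neg (by decide : ¬((0:ZMod 2) = 1))]
    norm_num
  · rw [if_neg (by decide : ¬((1:ZMod 2) + 1 = 1)), if_pos (rfl : (1:ZMod 2) = 1)]
    norm_num

lemma G_add_self (x : G) : x + x = 0 := by
  funext i
  have h : ∀ a : ZMod 2, a + a = 0 := by decide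
  exact h (x i)

lemma G_sub_eq_add (x y : G) : x - y = x + y := by
  rw [sub_eq_add_neg, neg_eq_of_add_eq_zero_right (G_add_self y)]

private lemma prod_range_ext (k : ℕ) (x : G) {M N : ℕ} (hMN : M ≤ N) (h : k < 2 ^ M) :
    ∏ i ∈ Finset.range N, (if k.testBit i ∧ x i = 1 then (-1 : ℝ) else 1)
      = ∏ i ∈ Finset.range M, (if k.testBit i ∧ x i = 1 then (-1 : ℝ) else 1) := by
  refine (Finset.prod_subset (Finset.range_subset_range.2 hMN) ?_).symm
  intro i hi hni
  have hM : M ≤ i := by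
    by_contra hc
    exact hni (Finset.mem_range.2 (lt_of_not_ge hc))
  have : k.testBit i = false :=
    Nat.testBit_lt_two_pow (lt_of_lt_of_le h (Nat.pow_le_pow_right (by norm_num) hM))
  simp [this]

lemma walsh_eq_prod (k M : ℕ) (h : k < 2 ^ M) (x : G) :
    walsh k x = ∏ i ∈ Finset.range M, if k.testBit i ∧ x i = 1 then (-1 : ℝ) else 1 := by
  have h1 : k < 2 ^ k := Nat.lt_two_pow_self (n := k)
  rw [walsh, ← prod_range_ext k x (le_max_left k M) h1,
    prod_range_ext k x (le_max_right k M) h]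

lemma walsh_add (k : ℕ) (x y : G) : walsh k (x + y) = walsh k x * walsh k y := by
  rw [walsh, walsh, walsh, ← Finset.prod_mul_distrib]
  refine Finset.prod_congr rfl fun i _ => ?_
  rcases Classical.em (k.testBit i) with hb | hb
  · simp only [hb, true_and]
    have hxy : (x + y) i = x i + y i := rfl
    rw [hxy]
    exact ite_zmod_mul (x i) (y i)
  · have h1 : ¬(k.testBit i = true ∧ (x+y) i = 1) := fun h => hb h.1
    have h2 : ¬(k.testBit i = true ∧ x i = 1) := fun h => hb h.1
    have h3 : ¬(k.testBit i = true ∧ y i = 1) := fun h => hb h.1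
    rw [if_neg h1, if_neg h2, if_neg h3]
    norm_num

lemma walsh_abs_le (k : ℕ) (x : G) : |walsh k x| ≤ 1 := by
  rw [walsh, Finset.abs_prod]
  refine (Finset.prod_le_one (fun i _ => abs_nonneg _) (fun i _ => ?_))
  split <;> simp

lemma walsh_measurable (k : ℕ) : Measurable (walsh k) := by
  refine Finset.measurable_prod _ fun i _ => ?_
  have h1 : MeasurableSet {x : G | k.testBit i ∧ x i = 1} := by
    rcases Classical.em (k.testBit i) with hb | hb
    · simp only [hb, true_and]
      exact (measurable_pi_apply i) (MeasurableSet.singleton 1)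
    · simp [hb]
  exact Measurable.ite h1 measurable_const measurable_const

lemma walsh_eq_one_on_Gset {k n : ℕ} (h : k < 2 ^ n) {x : G} (hx : x ∈ Gset n) :
    walsh k x = 1 := by
  rw [walsh_eq_prod k n h]
  refine Finset.prod_eq_one fun i hi => ?_
  have : x i = 0 := hx i (Finset.mem_range.1 hi)
  simp [this]

lemma walsh_shift {k n : ℕ} (h : k < 2 ^ n) (x : G) :
    walsh (2 ^ n + k) x = walsh k x * (if x n = 1 then (-1:ℝ) else 1) := by
  have h2 : 2 ^ n + k < 2 ^ (n + 1) := by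
    have : (2:ℕ) ^ (n+1) = 2 ^ n + 2 ^ n := by ring
    omega
  rw [walsh_eq_prod _ (n+1) h2, Finset.prod_range_succ, walsh_eq_prod k n h]
  congr 1
  · refine Finset.prod_congr rfl fun i hi => ?_
    have hin : i < n := Finset.mem_range.1 hi
    rw [Nat.testBit_two_pow_add_gt hin]
  · rw [Nat.testBit_two_pow_add_eq, Nat.testBit_lt_two_pow h]
    simp

lemma sum_walsh (n : ℕ) (z : G) :
    ∑ k ∈ Finset.range (2 ^ n), walsh k z = if z ∈ Gset n then (2:ℝ) ^ n else 0 := by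
  induction n with
  | zero =>
    simp [walsh, Gset]
  | succ n ih =>
    have hsplit : Finset.range (2 ^ (n+1)) =
        Finset.range (2 ^ n) ∪ (Finset.range (2 ^ n)).map
          ⟨fun k => 2 ^ n + k, add_right_injective (2 ^ n)⟩ := by
      ext k
      simp only [Finset.mem_union, Finset.mem_range, Finset.mem_map, Function.Embedding.coeFn_mk]
      constructor
      · intro hk
        rcases lt_or_ge k (2 ^ n) with h | h
        · exact Or.inl h
        · refine Or.inr ⟨k - 2 ^ n, ?_, by omega⟩
          have : (2:ℕ) ^ (n+1) = 2 ^ n + 2 ^ n := by ring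
          omega
      · intro hk
        have : (2:ℕ) ^ (n+1) = 2 ^ n + 2 ^ n := by ring
        rcases hk with h | ⟨a, ha, rfl⟩ <;> omega
    have hdisj : Disjoint (Finset.range (2 ^ n))
        ((Finset.range (2 ^ n)).map ⟨fun k => 2 ^ n + k, add_right_injective (2 ^ n)⟩) := by
      rw [Finset.disjoint_left]
      intro k hk hk2
      simp only [Finset.mem_range] at hk
      simp only [Finset.mem_map, Function.Embedding.coeFn_mk] at hk2
      omega
    rw [hsplit, Finset.sum_union hdisj, Finset.sum_map]
    simp only [Function.Embedding.coeFn_mk]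
    have : ∀ k ∈ Finset.range (2 ^ n), walsh (2 ^ n + k) z
        = walsh k z * (if z n = 1 then (-1:ℝ) else 1) := fun k hk =>
      walsh_shift (Finset.mem_range.1 hk) z
    rw [Finset.sum_congr rfl this, ← Finset.sum_mul, ih]
    have hGsucc : z ∈ Gset (n+1) ↔ z ∈ Gset n ∧ z n = 0 := by
      constructor
      · intro h; exact ⟨fun i hi => h i (by omega), h n (by omega)⟩
      · rintro ⟨h1, h2⟩ i hi
        rcases Nat.lt_succ_iff_lt_or_eq.1 hi with h | rfl
        · exact h1 i h
        · exact h2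
    by_cases hz : z ∈ Gset n
    · by_cases hzn : z n = 0
      · have hn1 : ¬ z n = 1 := by
          rw [hzn]; decide
        have hg : z ∈ Gset (n+1) := hGsucc.2 ⟨hz, hzn⟩
        rw [if_pos hz, if_pos hg, if_neg hn1]
        ring
      · have h1 : z n = 1 := (zmod2_cases (z n)).resolve_left hzn
        have hg : ¬ (z ∈ Gset (n+1)) := by rw [hGsucc]; tauto
        rw [if_pos hz, if_pos h1, if_neg hg]
        ring
    · have hg : ¬ (z ∈ Gset (n+1)) := by rw [hGsucc]; tauto
      rw [if_neg hz, if_neg hg]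
      ring

noncomputable section

lemma Gset_measurable (n : ℕ) : MeasurableSet (Gset n) := by
  have : Gset n = ⋂ i ∈ Finset.range n, (fun x : G => x i) ⁻¹' {0} := by
    ext x
    simp [Gset, Set.mem_iInter]
  rw [this]
  exact MeasurableSet.biInter (Finset.range n).countable_toSet
    (fun i _ => (measurable_pi_apply i) (MeasurableSet.singleton 0))

lemma Gset_zero_mem (n : ℕ) : (0 : G) ∈ Gset n := fun i _ => rfl

lemma Gset_add {n : ℕ} {x y : G} (hx : x ∈ Gset n) (hy : y ∈ Gset n) : x + y ∈ Gset n := by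
  intro i hi
  have : (x + y) i = x i + y i := rfl
  rw [this, hx i hi, hy i hi, add_zero]

lemma Gset_antitone {m n : ℕ} (h : m ≤ n) : Gset n ⊆ Gset m :=
  fun x hx i hi => hx i (lt_of_lt_of_le hi h)

/-- the unit vector e_i -/
def evec (i : ℕ) : G := fun m => if m = i then 1 else 0

lemma evec_mem_Gset {i n : ℕ} (h : n ≤ i) : evec i ∈ Gset n := by
  intro m hm
  simp only [evec]
  rw [if_neg (by omega)]

lemma add_evec_mem_Gset_iff {i n : ℕ} (h : n ≤ i) (x : G) :
    evec i + x ∈ Gset n ↔ x ∈ Gset n := by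
  constructor
  · intro hx
    have : x = evec i + (evec i + x) := by
      rw [← add_assoc, G_add_self, zero_add]
    rw [this]
    exact Gset_add (evec_mem_Gset h) hx
  · intro hx
    exact Gset_add (evec_mem_Gset h) hx

lemma walsh_evec {k i : ℕ} (h : k.testBit i = true) : walsh k (evec i) = -1 := by
  have hik : 2 ^ i ≤ k := Nat.ge_two_pow_of_testBit h
  have hk : k < 2 ^ k := Nat.lt_two_pow_self (n := k)
  rw [walsh_eq_prod k k hk]
  have hmem : i ∈ Finset.range k := by
    refine Finset.mem_range.2 ?_
    calc i < 2 ^ i := Nat.lt_two_pow_self (n := i)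
    _ ≤ k := hik
  rw [Finset.prod_eq_single i]
  · rw [if_pos ⟨h, by simp [evec]⟩]
  · intro m _ hmi
    have : evec i m = 0 := by simp [evec, hmi]
    simp [this]
  · intro hcon
    exact absurd hmem hcon

variable (lam : Measure G) [IsProbabilityMeasure lam] [lam.IsAddLeftInvariant]

lemma lam_Gset (n : ℕ) : lam (Gset n) = (2 : ℝ≥0∞)⁻¹ ^ n := by
  induction n with
  | zero =>
    have : Gset 0 = Set.univ := by
      ext x; simp [Gset]
    simp [this]
  | succ n ih =>
    have hsplit : Gset n = Gset (n+1) ∪ ((evec n + ·) ⁻¹' (Gset (n+1))) := by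
      ext x
      simp only [Set.mem_union, Set.mem_preimage]
      constructor
      · intro hx
        rcases zmod2_cases (x n) with h | h
        · left
          intro i hi
          rcases Nat.lt_succ_iff_lt_or_eq.1 hi with h' | rfl
          · exact hx i h'
          · exact h
        · right
          intro i hi
          have hei : (evec n + x) i = evec n i + x i := rfl
          rcases Nat.lt_succ_iff_lt_or_eq.1 hi with h' | rfl
          · rw [hei, hx i h']
            simp [evec, Nat.ne_of_lt h']
          · rw [hei, h]
            simp [evec]
            decide
      · intro hx i hi
        rcases hx with h | h
        · exact h i (by omega)
        · have := h i (by omega)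
          have hei : (evec n + x) i = evec n i + x i := rfl
          rw [hei] at this
          simpa [evec, Nat.ne_of_lt hi] using this
    have hdisj : Disjoint (Gset (n+1)) ((evec n + ·) ⁻¹' (Gset (n+1))) := by
      rw [Set.disjoint_left]
      intro x hx hx2
      have h1 : x n = 0 := hx n (by omega)
      have h2 : (evec n + x) n = 0 := hx2 n (by omega)
      have : (evec n + x) n = evec n n + x n := rfl
      rw [this, h1] at h2
      simp [evec] at h2
    have hmeas2 : MeasurableSet ((evec n + ·) ⁻¹' (Gset (n+1))) := by
      exact (measurable_const_add (evec n)) (Gset_measurable (n+1))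
    have := measure_union (μ := lam) hdisj hmeas2
    rw [← hsplit, measure_preimage_add lam (evec n) (Gset (n+1))] at this
    rw [ih] at this
    have h2 : lam (Gset (n+1)) + lam (Gset (n+1)) = (2:ℝ≥0∞)⁻¹ ^ n := this.symm
    rw [← two_mul] at h2
    rw [pow_succ]
    calc lam (Gset (n+1)) = (2:ℝ≥0∞)⁻¹ * (2 * lam (Gset (n+1))) := by
          rw [← mul_assoc, ENNReal.inv_mul_cancel two_ne_zero (by norm_num), one_mul]
    _ = (2:ℝ≥0∞)⁻¹ * (2:ℝ≥0∞)⁻¹ ^ n := by rw [h2]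
    _ = (2:ℝ≥0∞)⁻¹ ^ n * 2⁻¹ := mul_comm _ _

lemma lam_Gset_toReal (n : ℕ) : (lam (Gset n)).toReal = (2:ℝ)⁻¹ ^ n := by
  rw [lam_Gset]
  simp [ENNReal.toReal_pow]

lemma lam_singleton_zero : lam {(0:G)} = 0 := by
  have h : ∀ n : ℕ, lam {(0:G)} ≤ (2:ℝ≥0∞)⁻¹ ^ n := by
    intro n
    rw [← lam_Gset lam n]
    exact measure_mono (by intro x hx; rw [Set.mem_singleton_iff] at hx; subst hx; exact Gset_zero_mem n)
  have hlim : Tendsto (fun n : ℕ => (2:ℝ≥0∞)⁻¹ ^ n) atTop (𝓝 0) :=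
    ENNReal.tendsto_pow_atTop_nhds_zero_of_lt_one (by norm_num)
  have := ge_of_tendsto hlim (Eventually.of_forall h)
  exact le_antisymm this zero_le

/-- integral of walsh over Gset j -/
lemma integral_walsh_Gset (j k : ℕ) :
    ∫ z in Gset j, walsh k z ∂lam = if k < 2 ^ j then ((2:ℝ)⁻¹) ^ j else 0 := by
  by_cases hk : k < 2 ^ j
  · rw [if_pos hk]
    rw [setIntegral_congr_fun (Gset_measurable j) (fun x hx => walsh_eq_one_on_Gset hk hx)]
    simp [measureReal_def, lam_Gset_toReal lam j]
  · rw [if_neg hk]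
    push_neg at hk
    obtain ⟨i, hij, hbit⟩ := Nat.exists_ge_and_testBit_of_ge_two_pow hk
    set f : G → ℝ := (Gset j).indicator (walsh k) with hf
    have hI : ∫ z in Gset j, walsh k z ∂lam = ∫ z, f z ∂lam := by
      rw [hf, integral_indicator (Gset_measurable j)]
    have hshift : ∫ z, f z ∂lam = ∫ z, f (evec i + z) ∂lam :=
      (integral_add_left_eq_self f (evec i)).symm
    have hptw : ∀ z, f (evec i + z) = - f z := by
      intro z
      rw [hf]
      by_cases hz : z ∈ Gset j
      · rw [Set.indicator_of_mem ((add_evec_mem_Gset_iff hij z).2 hz),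
          Set.indicator_of_mem hz, walsh_add, walsh_evec hbit]
        ring
      · rw [Set.indicator_of_notMem (fun hc => hz ((add_evec_mem_Gset_iff hij z).1 hc)),
          Set.indicator_of_notMem hz, neg_zero]
    have : ∫ z, f z ∂lam = - ∫ z, f z ∂lam := by
      calc ∫ z, f z ∂lam = ∫ z, f (evec i + z) ∂lam := hshift
      _ = ∫ z, - f z ∂lam := by simp_rw [hptw]
      _ = - ∫ z, f z ∂lam := integral_neg f
    rw [hI]
    linarith [this]

end

noncomputable section

lemma kernel_nonneg (s : ℝ) (x : G) : 0 ≤ kernel s x := by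
  rw [kernel]
  split
  · positivity
  · exact le_refl 0

lemma kernel_zero (s : ℝ) : kernel s 0 = 0 := by
  rw [kernel, dif_neg]
  push_neg
  intro i
  rfl

lemma exists_ne_of_ne_zero {x : G} (hx : x ≠ 0) : ∃ i, x i ≠ 0 := by
  by_contra hc
  push_neg at hc
  exact hx (funext hc)

lemma mem_Gset_iff_le_find {x : G} (h : ∃ i, x i ≠ 0) (n : ℕ) :
    x ∈ Gset n ↔ n ≤ Nat.find h := by
  constructor
  · intro hx
    by_contra hc
    push_neg at hc
    exact (Nat.find_spec h) (hx _ hc)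
  · intro hn i hi
    by_contra hc
    exact absurd (Nat.find_min' h hc) (by omega)

lemma kernel_ge_on_Gset {s : ℝ} (hs : 0 ≤ s) {n : ℕ} {x : G} (hx : x ∈ Gset n) (hx0 : x ≠ 0) :
    (2:ℝ) ^ (s * (n:ℝ)) ≤ kernel s x := by
  have h := exists_ne_of_ne_zero hx0
  rw [kernel, dif_pos h]
  have hn : (n:ℝ) ≤ (Nat.find h : ℝ) := by
    exact_mod_cast (mem_Gset_iff_le_find h n).1 hx
  exact Real.rpow_le_rpow_of_exponent_le one_le_two (by nlinarith)

lemma kernel_le_of_not_mem {s : ℝ} (hs : 0 ≤ s) {n : ℕ} {x : G} (hx : x ∉ Gset n) :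
    kernel s x ≤ (2:ℝ) ^ (s * (n:ℝ)) := by
  have h : ∃ i, x i ≠ 0 := by
    by_contra hc
    push_neg at hc
    exact hx (fun i _ => hc i)
  rw [kernel, dif_pos h]
  have hn : Nat.find h < n := by
    by_contra hc
    push_neg at hc
    exact hx ((mem_Gset_iff_le_find h n).2 hc)
  have : (Nat.find h : ℝ) ≤ (n:ℝ) := by exact_mod_cast hn.le
  exact Real.rpow_le_rpow_of_exponent_le one_le_two (by nlinarith)

/-- layer coefficients -/
def bcoef (s : ℝ) (j : ℕ) : ℝ :=
  if j = 0 then 1 else (2:ℝ) ^ (s * (j:ℝ)) - (2:ℝ) ^ (s * ((j-1 : ℕ):ℝ))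

lemma bcoef_nonneg {s : ℝ} (hs : 0 ≤ s) (j : ℕ) : 0 ≤ bcoef s j := by
  rw [bcoef]
  split
  · norm_num
  · rename_i hj
    have h1 : (((j:ℕ) - 1 : ℕ):ℝ) ≤ (j:ℝ) := by
      have : (j:ℕ) - 1 ≤ j := Nat.sub_le j 1
      exact_mod_cast this
    have := Real.rpow_le_rpow_of_exponent_le one_le_two (by nlinarith : s * (((j:ℕ)-1:ℕ):ℝ) ≤ s * (j:ℝ))
    linarith

lemma bcoef_le {s : ℝ} (hs : 0 ≤ s) (j : ℕ) : bcoef s j ≤ (2:ℝ) ^ (s * (j:ℝ)) := by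
  rw [bcoef]
  split
  · rename_i hj
    subst hj
    simp [Real.rpow_natCast]
  · have : (0:ℝ) < (2:ℝ) ^ (s * (((j:ℕ)-1:ℕ)):ℝ) := Real.rpow_pos_of_pos two_pos _
    nlinarith [Real.rpow_pos_of_pos (two_pos) (s * (((j:ℕ)-1:ℕ):ℝ))]

lemma sum_bcoef (s : ℝ) (m : ℕ) :
    ∑ j ∈ Finset.range (m+1), bcoef s j = (2:ℝ) ^ (s * (m:ℝ)) := by
  induction m with
  | zero =>
    simp [bcoef]
  | succ m ih =>
    rw [Finset.sum_range_succ, ih, bcoef, if_neg (Nat.succ_ne_zero m)]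
    have : (m+1 : ℕ) - 1 = m := rfl
    rw [this]
    ring

/-- the j-th layer function -/
def layer (s : ℝ) (j : ℕ) : G → ℝ := Set.indicator (Gset j \ {0}) (fun _ => bcoef s j)

lemma layer_measurable (s : ℝ) (j : ℕ) : Measurable (layer s j) :=
  (measurable_const).indicator ((Gset_measurable j).diff (MeasurableSet.singleton 0))

lemma layer_finsupp {s : ℝ} {z : G} (hz : z ≠ 0) (h : ∃ i, z i ≠ 0) {j : ℕ}
    (hj : j ∉ Finset.range (Nat.find h + 1)) : layer s j z = 0 := by
  rw [layer, Set.indicator_of_notMem]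
  intro hmem
  have := (mem_Gset_iff_le_find h j).1 hmem.1
  simp only [Finset.mem_range] at hj
  omega

lemma kernel_eq_tsum_layer {s : ℝ} (z : G) :
    kernel s z = ∑' j, layer s j z := by
  by_cases hz : z = 0
  · subst hz
    rw [kernel_zero]
    have : ∀ j, layer s j (0:G) = 0 := by
      intro j
      rw [layer, Set.indicator_of_notMem]
      simp
    simp [this]
  · have h := exists_ne_of_ne_zero hz
    rw [tsum_eq_sum (s := Finset.range (Nat.find h + 1)) (fun j hj => layer_finsupp hz h hj)]
    have hmem : ∀ j ∈ Finset.range (Nat.find h + 1), layer s j z = bcoef s j := by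
      intro j hj
      rw [layer, Set.indicator_of_mem]
      exact ⟨(mem_Gset_iff_le_find h j).2 (by simpa [Nat.lt_succ_iff] using Finset.mem_range.1 hj), hz⟩
    rw [Finset.sum_congr rfl hmem, sum_bcoef, kernel, dif_pos h]

lemma kernel_measurable (s : ℝ) : Measurable (kernel s) := by
  have h : ∀ z : G, Tendsto (fun N => ∑ j ∈ Finset.range N, layer s j z) atTop
      (𝓝 (kernel s z)) := by
    intro z
    rw [kernel_eq_tsum_layer z]
    refine HasSum.tendsto_sum_nat (Summable.hasSum ?_)
    by_cases hz : z = 0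
    · subst hz
      refine summable_of_ne_finset_zero (s := ∅) (fun j _ => ?_)
      rw [layer, Set.indicator_of_notMem]
      simp
    · exact summable_of_ne_finset_zero (fun j hj => layer_finsupp hz (exists_ne_of_ne_zero hz) hj)
  exact measurable_of_tendsto_metrizable
    (fun N => Finset.measurable_sum _ fun j _ => layer_measurable s j) (tendsto_pi_nhds.2 h)

variable (lam : Measure G) [IsProbabilityMeasure lam] [lam.IsAddLeftInvariant]

lemma Gset_diff_ae (j : ℕ) : (Gset j \ {0} : Set G) =ᵐ[lam] (Gset j : Set G) := by
  rw [diff_ae_eq_self]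
  exact measure_mono_null Set.inter_subset_right (lam_singleton_zero lam)

lemma tsum_pow_bound {s : ℝ} (hs : 0 ≤ s) (hs1 : s < 1) :
    (∑' j : ℕ, ENNReal.ofReal ((2:ℝ) ^ (s * (j:ℝ))) * (2:ℝ≥0∞)⁻¹ ^ j) ≠ ⊤ := by
  have hptw : ∀ j : ℕ, ENNReal.ofReal ((2:ℝ) ^ (s * (j:ℝ))) * (2:ℝ≥0∞)⁻¹ ^ j
      = (ENNReal.ofReal ((2:ℝ) ^ (s - 1))) ^ j := by
    intro j
    have h1 : (2:ℝ) ^ (s * (j:ℝ)) = ((2:ℝ) ^ s) ^ j := by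
      rw [← Real.rpow_natCast ((2:ℝ)^s) j, ← Real.rpow_mul (by norm_num)]
    have h2 : (2:ℝ≥0∞)⁻¹ ^ j = ENNReal.ofReal ((2:ℝ)⁻¹ ^ j) := by
      rw [ENNReal.ofReal_pow (by norm_num)]
      congr 1
      rw [ENNReal.ofReal_inv_of_pos two_pos]
      norm_num
    rw [h1, h2, ← ENNReal.ofReal_mul (by positivity), ← ENNReal.ofReal_pow]
    · congr 1
      rw [← mul_pow]
      congr 1
      rw [Real.rpow_sub two_pos, Real.rpow_one]
      ring
    · positivity
  rw [tsum_congr hptw, ENNReal.tsum_geometric]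
  have hlt : ENNReal.ofReal ((2:ℝ) ^ (s - 1)) < 1 := by
    rw [← ENNReal.ofReal_one]
    refine ENNReal.ofReal_lt_ofReal_iff_of_nonneg (by positivity) |>.2 ?_
    have : (2:ℝ) ^ (s - 1) < (2:ℝ) ^ (0:ℝ) :=
      Real.rpow_lt_rpow_of_exponent_lt one_lt_two (by linarith)
    simpa using this
  exact ENNReal.inv_ne_top.2 (tsub_pos_of_lt hlt).ne'


lemma layer_nonneg {s : ℝ} (hs : 0 ≤ s) (j : ℕ) (z : G) : 0 ≤ layer s j z := by
  rw [layer]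
  by_cases hz : z ∈ Gset j \ {0}
  · rw [Set.indicator_of_mem hz]; exact bcoef_nonneg hs j
  · rw [Set.indicator_of_notMem hz]

lemma layer_le {s : ℝ} (hs : 0 ≤ s) (j : ℕ) (z : G) :
    layer s j z ≤ Set.indicator (Gset j) (fun _ => (2:ℝ) ^ (s * (j:ℝ))) z := by
  rw [layer]
  by_cases hz : z ∈ Gset j \ {0}
  · rw [Set.indicator_of_mem hz, Set.indicator_of_mem hz.1]
    exact bcoef_le hs j
  · rw [Set.indicator_of_notMem hz]
    by_cases hz2 : z ∈ Gset j
    · rw [Set.indicator_of_mem hz2]; positivity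
    · rw [Set.indicator_of_notMem hz2]

lemma lintegral_ofReal_layer_le {s : ℝ} (hs : 0 ≤ s) (j : ℕ) :
    ∫⁻ z, ENNReal.ofReal (layer s j z) ∂lam
      ≤ ENNReal.ofReal ((2:ℝ) ^ (s * (j:ℝ))) * (2:ℝ≥0∞)⁻¹ ^ j := by
  have hb : ∀ z, ENNReal.ofReal (layer s j z)
      ≤ Set.indicator (Gset j) (fun _ => ENNReal.ofReal ((2:ℝ) ^ (s * (j:ℝ)))) z := by
    intro z
    by_cases hz2 : z ∈ Gset j
    · rw [Set.indicator_of_mem hz2]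
      refine ENNReal.ofReal_le_ofReal ?_
      refine (layer_le hs j z).trans ?_
      by_cases hz : z ∈ Gset j
      · rw [Set.indicator_of_mem hz]
      · rw [Set.indicator_of_notMem hz]; positivity
    · rw [Set.indicator_of_notMem hz2, layer, Set.indicator_of_notMem (fun hc => hz2 hc.1)]
      simp
  calc ∫⁻ z, ENNReal.ofReal (layer s j z) ∂lam
      ≤ ∫⁻ z, Set.indicator (Gset j) (fun _ => ENNReal.ofReal ((2:ℝ) ^ (s * (j:ℝ)))) z ∂lam :=
        lintegral_mono hb
  _ = ENNReal.ofReal ((2:ℝ) ^ (s * (j:ℝ))) * lam (Gset j) := by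
      rw [lintegral_indicator (Gset_measurable j) _, setLIntegral_const]
  _ = _ := by rw [lam_Gset lam j]

lemma nnnorm_layer_mul_le {s : ℝ} (hs : 0 ≤ s) (j : ℕ) {g : G → ℝ} (hg : ∀ z, |g z| ≤ 1) (z : G) :
    (‖layer s j z * g z‖₊ : ℝ≥0∞) ≤ ENNReal.ofReal (layer s j z) := by
  rw [← enorm_eq_nnnorm, ← ofReal_norm]
  refine ENNReal.ofReal_le_ofReal ?_
  rw [norm_mul, Real.norm_eq_abs, Real.norm_eq_abs, abs_of_nonneg (layer_nonneg hs j z)]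
  calc layer s j z * |g z| ≤ layer s j z * 1 :=
        mul_le_mul_of_nonneg_left (hg z) (layer_nonneg hs j z)
  _ = layer s j z := mul_one _

lemma ofReal_kernel_eq_tsum {s : ℝ} (hs : 0 ≤ s) (z : G) :
    ENNReal.ofReal (kernel s z) = ∑' j, ENNReal.ofReal (layer s j z) := by
  by_cases hz : z = 0
  · subst hz
    rw [kernel_zero]
    have : ∀ j, layer s j (0:G) = 0 := by
      intro j
      rw [layer, Set.indicator_of_notMem]
      simp
    simp [this]
  · have h := exists_ne_of_ne_zero hz
    rw [tsum_eq_sum (s := Finset.range (Nat.find h + 1))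
      (fun j hj => by rw [layer_finsupp hz h hj, ENNReal.ofReal_zero]),
      kernel_eq_tsum_layer z,
      tsum_eq_sum (s := Finset.range (Nat.find h + 1)) (fun j hj => layer_finsupp hz h hj),
      ENNReal.ofReal_sum_of_nonneg (fun j _ => layer_nonneg hs j z)]

lemma nnnorm_kernel_mul_le {s : ℝ} {g : G → ℝ} (hg : ∀ z, |g z| ≤ 1) (z : G) :
    (‖kernel s z * g z‖₊ : ℝ≥0∞) ≤ ENNReal.ofReal (kernel s z) := by
  rw [← enorm_eq_nnnorm, ← ofReal_norm]
  refine ENNReal.ofReal_le_ofReal ?_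
  rw [norm_mul, Real.norm_eq_abs, Real.norm_eq_abs, abs_of_nonneg (kernel_nonneg s z)]
  calc kernel s z * |g z| ≤ kernel s z * 1 :=
        mul_le_mul_of_nonneg_left (hg z) (kernel_nonneg s z)
  _ = kernel s z := mul_one _

lemma lintegral_ofReal_kernel_lt_top {s : ℝ} (hs : 0 ≤ s) (hs1 : s < 1) :
    ∫⁻ z, ENNReal.ofReal (kernel s z) ∂lam ≠ ⊤ := by
  have h1 : ∫⁻ z, ENNReal.ofReal (kernel s z) ∂lam
      = ∑' j, ∫⁻ z, ENNReal.ofReal (layer s j z) ∂lam := by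
    rw [← lintegral_tsum (fun j => ((layer_measurable s j).ennreal_ofReal).aemeasurable)]
    exact lintegral_congr (fun z => ofReal_kernel_eq_tsum hs z)
  rw [h1]
  refine ne_top_of_le_ne_top (tsum_pow_bound hs hs1) (ENNReal.tsum_le_tsum ?_)
  exact fun j => lintegral_ofReal_layer_le lam hs j

lemma kernel_mul_integrable {s : ℝ} (hs : 0 ≤ s) (hs1 : s < 1) {g : G → ℝ}
    (hgm : Measurable g) (hg : ∀ z, |g z| ≤ 1) :
    Integrable (fun z => kernel s z * g z) lam := by
  constructor
  · exact ((kernel_measurable s).mul hgm).aestronglyMeasurable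
  · rw [hasFiniteIntegral_def]
    refine lt_of_le_of_lt (lintegral_mono (fun z => nnnorm_kernel_mul_le hg z)) ?_
    exact lt_top_iff_ne_top.2 (lintegral_ofReal_kernel_lt_top lam hs hs1)

lemma kernel_integrable {s : ℝ} (hs : 0 ≤ s) (hs1 : s < 1) : Integrable (kernel s) lam := by
  have := kernel_mul_integrable lam hs hs1 (g := fun _ => 1) measurable_const (by norm_num)
  simpa using this

/-- the explicit formula for phiHat -/
lemma phiHat_eq {s : ℝ} (hs : 0 ≤ s) (hs1 : s < 1) (k : ℕ) :
    phiHat s lam k = ∑' j, bcoef s j * (if k < 2 ^ j then ((2:ℝ)⁻¹) ^ j else 0) := by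
  rw [phiHat]
  have hptw : ∀ z, kernel s z * walsh k z = ∑' j, layer s j z * walsh k z := by
    intro z
    rw [kernel_eq_tsum_layer z, tsum_mul_right]
  rw [integral_congr_ae (Eventually.of_forall hptw)]
  rw [integral_tsum (f := fun j z => layer s j z * walsh k z) (fun j => ((layer_measurable s j).mul (walsh_measurable k)).aestronglyMeasurable)]
  · refine tsum_congr fun j => ?_
    have : (fun z => layer s j z * walsh k z)
        = Set.indicator (Gset j \ {0}) (fun z => bcoef s j * walsh k z) := by
      funext z
      rw [layer]
      by_cases hz : z ∈ Gset j \ {0}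
      · rw [Set.indicator_of_mem hz, Set.indicator_of_mem hz]
      · rw [Set.indicator_of_notMem hz, Set.indicator_of_notMem hz, zero_mul]
    rw [this, integral_indicator ((Gset_measurable j).diff (MeasurableSet.singleton 0)),
      setIntegral_congr_set (Gset_diff_ae lam j), integral_const_mul,
      integral_walsh_Gset lam j k]
  · refine ne_top_of_le_ne_top (tsum_pow_bound hs hs1) (ENNReal.tsum_le_tsum fun j => ?_)
    refine le_trans (lintegral_mono fun z => ?_) (lintegral_ofReal_layer_le lam hs j)
    exact nnnorm_layer_mul_le hs j (fun z => walsh_abs_le k z) z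

lemma phiHat_nonneg {s : ℝ} (hs : 0 ≤ s) (hs1 : s < 1) (k : ℕ) : 0 ≤ phiHat s lam k := by
  rw [phiHat_eq lam hs hs1 k]
  refine tsum_nonneg fun j => ?_
  refine mul_nonneg (bcoef_nonneg hs j) ?_
  split <;> positivity

end

noncomputable section

/-- the n-truncated kernel, constant on cosets of G_n -/
def Fn (s : ℝ) (n : ℕ) (z : G) : ℝ := if z ∈ Gset n then (2:ℝ) ^ (s * (n:ℝ)) else kernel s z

def FnHat (s : ℝ) (n : ℕ) (lam : Measure G) (k : ℕ) : ℝ := ∫ z, Fn s n z * walsh k z ∂lam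

lemma Fn_measurable (s : ℝ) (n : ℕ) : Measurable (Fn s n) :=
  Measurable.ite (Gset_measurable n) measurable_const (kernel_measurable s)

lemma Fn_nonneg (s : ℝ) (n : ℕ) (z : G) : 0 ≤ Fn s n z := by
  rw [Fn]; split
  · positivity
  · exact kernel_nonneg s z

lemma Fn_le {s : ℝ} (hs : 0 ≤ s) (n : ℕ) (z : G) : Fn s n z ≤ (2:ℝ) ^ (s * (n:ℝ)) := by
  rw [Fn]; split
  · exact le_refl _
  · rename_i h; exact kernel_le_of_not_mem hs h

lemma Fn_abs_le {s : ℝ} (hs : 0 ≤ s) (n : ℕ) (z : G) : |Fn s n z| ≤ (2:ℝ) ^ (s * (n:ℝ)) := by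
  rw [abs_of_nonneg (Fn_nonneg s n z)]
  exact Fn_le hs n z

lemma Fn_mono {s : ℝ} (hs : 0 ≤ s) (n : ℕ) (z : G) : Fn s n z ≤ Fn s (n+1) z := by
  by_cases h1 : z ∈ Gset (n+1)
  · rw [Fn, Fn, if_pos h1, if_pos (Gset_antitone (Nat.le_succ n) h1)]
    refine Real.rpow_le_rpow_of_exponent_le one_le_two ?_
    have : (n:ℝ) ≤ ((n+1 : ℕ):ℝ) := by exact_mod_cast Nat.le_succ n
    nlinarith
  · by_cases h2 : z ∈ Gset n
    · rw [Fn, Fn, if_pos h2, if_neg h1]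
      have hz0 : z ≠ 0 := fun hc => h1 (hc ▸ Gset_zero_mem (n+1))
      exact kernel_ge_on_Gset hs h2 hz0
    · rw [Fn, Fn, if_neg h2, if_neg h1]

lemma ofReal_kernel_le_iSup (s : ℝ) (z : G) :
    ENNReal.ofReal (kernel s z) ≤ ⨆ n, ENNReal.ofReal (Fn s n z) := by
  by_cases hz : z = 0
  · subst hz
    rw [kernel_zero]
    simp
  · obtain ⟨i, hi⟩ := exists_ne_of_ne_zero hz
    have hmem : z ∉ Gset (i+1) := fun hc => hi (hc i (by omega))
    have : ENNReal.ofReal (kernel s z) = ENNReal.ofReal (Fn s (i+1) z) := by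
      rw [Fn, if_neg hmem]
    rw [this]
    exact le_iSup (fun n => ENNReal.ofReal (Fn s n z)) (i+1)

lemma Fn_coset_const {s : ℝ} {n : ℕ} {g : G} (hg : g ∈ Gset n) (z : G) :
    Fn s n (z + g) = Fn s n z := by
  by_cases hz : z ∈ Gset n
  · rw [Fn, Fn, if_pos hz, if_pos (Gset_add hz hg)]
  · have hzg : z + g ∉ Gset n := by
      intro hc
      have : z = (z + g) + g := by rw [add_assoc, G_add_self, add_zero]
      exact hz (this ▸ Gset_add hc hg)
    rw [Fn, Fn, if_neg hzg, if_neg hz]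
    -- kernel equality
    have hbelow : ∃ i < n, z i ≠ 0 := by
      by_contra hc
      push_neg at hc
      exact hz (fun i hi => hc i hi)
    obtain ⟨i0, hi0n, hi0⟩ := hbelow
    have h1 : ∃ i, z i ≠ 0 := ⟨i0, hi0⟩
    have h2 : ∃ i, (z + g) i ≠ 0 := by
      refine ⟨i0, ?_⟩
      have : (z + g) i0 = z i0 + g i0 := rfl
      rw [this, hg i0 hi0n, add_zero]
      exact hi0
    have hfind1 : Nat.find h1 < n := by
      have := Nat.find_min' h1 hi0
      omega
    have key : Nat.find h2 = Nat.find h1 := by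
      have hle : Nat.find h2 ≤ Nat.find h1 := by
        refine Nat.find_min' h2 ?_
        have : (z + g) (Nat.find h1) = z (Nat.find h1) + g (Nat.find h1) := rfl
        rw [this, hg _ hfind1, add_zero]
        exact Nat.find_spec h1
      have hge : Nat.find h1 ≤ Nat.find h2 := by
        refine Nat.find_min' h1 ?_
        have hlt : Nat.find h2 < n := lt_of_le_of_lt hle hfind1
        have : z (Nat.find h2) = (z + g) (Nat.find h2) + g (Nat.find h2) := by
          show z _ = (z _ + g _) + g _
          rw [add_assoc]
          have : g (Nat.find h2) + g (Nat.find h2) = 0 := by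
            have := congrFun (G_add_self g) (Nat.find h2)
            exact this
          rw [this, add_zero]
        rw [this, hg _ hlt, add_zero]
        exact Nat.find_spec h2
      omega
    rw [kernel, kernel, dif_pos h1, dif_pos h2, key]

variable (lam : Measure G) [IsProbabilityMeasure lam] [lam.IsAddLeftInvariant]

lemma bounded_integrable (μ : Measure G) [IsFiniteMeasure μ] {f : G → ℝ} (hm : Measurable f)
    (C : ℝ) (hC : ∀ z, |f z| ≤ C) : Integrable f μ := by
  refine Integrable.mono' (integrable_const C) hm.aestronglyMeasurable ?_
  exact Eventually.of_forall (fun z => by rw [Real.norm_eq_abs]; exact hC z)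

lemma Fn_mul_walsh_integrable {s : ℝ} (hs : 0 ≤ s) (n k : ℕ) (μ : Measure G)
    [IsFiniteMeasure μ] : Integrable (fun z => Fn s n z * walsh k z) μ := by
  refine bounded_integrable μ ((Fn_measurable s n).mul (walsh_measurable k)) ((2:ℝ) ^ (s * (n:ℝ))) ?_
  intro z
  rw [abs_mul]
  calc |Fn s n z| * |walsh k z| ≤ (2:ℝ) ^ (s * (n:ℝ)) * 1 := by
        refine mul_le_mul (Fn_abs_le hs n z) (walsh_abs_le k z) (abs_nonneg _) (by positivity)
  _ = (2:ℝ) ^ (s * (n:ℝ)) := mul_one _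

/-- the pointwise finite Fourier expansion of Fn -/
lemma fourier_Fn {s : ℝ} (hs : 0 ≤ s) (n : ℕ) (z : G) :
    ∑ k ∈ Finset.range (2 ^ n), FnHat s n lam k * walsh k z = Fn s n z := by
  have step1 : ∀ k, FnHat s n lam k * walsh k z
      = ∫ y, Fn s n y * walsh k y * walsh k z ∂lam := by
    intro k
    rw [FnHat, ← integral_mul_const]
  rw [Finset.sum_congr rfl (fun k _ => step1 k)]
  rw [← integral_finset_sum]
  swap
  · intro k _
    refine bounded_integrable lam (((Fn_measurable s n).mul (walsh_measurable k)).mul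
      measurable_const) ((2:ℝ) ^ (s * (n:ℝ))) ?_
    intro y
    rw [abs_mul, abs_mul]
    calc |Fn s n y| * |walsh k y| * |walsh k z| ≤ (2:ℝ) ^ (s * (n:ℝ)) * 1 * 1 := by
          refine mul_le_mul (mul_le_mul (Fn_abs_le hs n y) (walsh_abs_le k y)
            (abs_nonneg _) (by positivity)) (walsh_abs_le k z) (abs_nonneg _) (by positivity)
    _ = (2:ℝ) ^ (s * (n:ℝ)) := by ring
  have hinner : ∀ y, ∑ k ∈ Finset.range (2 ^ n), Fn s n y * walsh k y * walsh k z
      = Fn s n y * (if y + z ∈ Gset n then (2:ℝ) ^ n else 0) := by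
    intro y
    rw [← sum_walsh n (y + z), Finset.mul_sum]
    refine Finset.sum_congr rfl fun k _ => ?_
    rw [walsh_add, mul_assoc]
  rw [integral_congr_ae (Eventually.of_forall hinner)]
  set S : Set G := {y | y + z ∈ Gset n} with hS
  have hSmeas : MeasurableSet S := by
    have : S = (fun y : G => y + z) ⁻¹' (Gset n) := rfl
    rw [this]
    exact (measurable_add_const z) (Gset_measurable n)
  have hind : (fun y => Fn s n y * (if y + z ∈ Gset n then (2:ℝ) ^ n else 0))
      = Set.indicator S (fun y => Fn s n y * (2:ℝ) ^ n) := by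
    funext y
    by_cases hy : y ∈ S
    · rw [Set.indicator_of_mem hy, if_pos (show y + z ∈ Gset n from hy)]
    · rw [Set.indicator_of_notMem hy, if_neg (show ¬ (y + z ∈ Gset n) from hy), mul_zero]
  rw [hind, integral_indicator hSmeas]
  have hconst : ∀ y ∈ S, Fn s n y * (2:ℝ) ^ n = Fn s n z * (2:ℝ) ^ n := by
    intro y hy
    congr 1
    have hyz : y = z + (y + z) := by
      rw [add_comm y z, ← add_assoc, G_add_self, zero_add]
    calc Fn s n y = Fn s n (z + (y + z)) := by rw [← hyz]
    _ = Fn s n z := Fn_coset_const hy z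
  rw [setIntegral_congr_fun hSmeas hconst, setIntegral_const]
  have hlamS : lam S = (2:ℝ≥0∞)⁻¹ ^ n := by
    have : S = (fun y : G => z + y) ⁻¹' (Gset n) := by
      ext y
      show y + z ∈ Gset n ↔ z + y ∈ Gset n
      rw [add_comm]
    rw [this, measure_preimage_add lam z (Gset n), lam_Gset lam n]
  rw [measureReal_def, hlamS]
  have htoReal : ((2:ℝ≥0∞)⁻¹ ^ n).toReal = ((2:ℝ)⁻¹) ^ n := by
    simp [ENNReal.toReal_pow]
  rw [smul_eq_mul, htoReal]
  have h2n : ((2:ℝ)⁻¹) ^ n * (2:ℝ) ^ n = 1 := by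
    rw [← mul_pow]
    norm_num
  calc ((2:ℝ)⁻¹) ^ n * (Fn s n z * (2:ℝ) ^ n) = Fn s n z * (((2:ℝ)⁻¹) ^ n * (2:ℝ) ^ n) := by ring
  _ = Fn s n z := by rw [h2n, mul_one]

lemma FnHat_le_phiHat {s : ℝ} (hs : 0 ≤ s) (hs1 : s < 1) {n k : ℕ} (hk : k < 2 ^ n) :
    FnHat s n lam k ≤ phiHat s lam k := by
  have hint1 : Integrable (fun z => kernel s z * walsh k z) lam :=
    kernel_mul_integrable lam hs hs1 (walsh_measurable k) (walsh_abs_le k)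
  have hint2 : Integrable (fun z => Fn s n z * walsh k z) lam :=
    Fn_mul_walsh_integrable hs n k lam
  have hdiff : phiHat s lam k - FnHat s n lam k
      = ∫ z, (kernel s z * walsh k z - Fn s n z * walsh k z) ∂lam := by
    rw [phiHat, FnHat, integral_sub hint1 hint2]
  have hnn : 0 ≤ ∫ z, (kernel s z * walsh k z - Fn s n z * walsh k z) ∂lam := by
    refine integral_nonneg_of_ae ?_
    have hsub : {z : G | ¬ (0 ≤ kernel s z * walsh k z - Fn s n z * walsh k z)} ⊆ {(0:G)} := by
      intro z hznn
      simp only [Set.mem_setOf_eq, not_le] at hznn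
      by_contra hz0
      have hz : z ≠ 0 := fun hc => hz0 (by rw [hc]; rfl)
      have : 0 ≤ kernel s z * walsh k z - Fn s n z * walsh k z := by
        by_cases hmem : z ∈ Gset n
        · have hw : walsh k z = 1 := walsh_eq_one_on_Gset hk hmem
          rw [hw, mul_one, mul_one, Fn, if_pos hmem]
          have := kernel_ge_on_Gset hs hmem hz
          linarith
        · rw [Fn, if_neg hmem]
          simp
      linarith
    refine Filter.eventually_iff.2 ?_
    rw [mem_ae_iff]
    refine measure_mono_null ?_ (lam_singleton_zero lam)
    intro z hz
    exact hsub hz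
  linarith

end

noncomputable section

variable (lam : Measure G) [IsProbabilityMeasure lam] [lam.IsAddLeftInvariant]
variable (μ : Measure G) [IsFiniteMeasure μ]

def qfun (s : ℝ) (n : ℕ) (x : G) : ℝ :=
  ∑ k ∈ Finset.range (2 ^ n), FnHat s n lam k * walsh k x * muHat μ k

lemma muHat_abs_le (k : ℕ) : |muHat μ k| ≤ (μ Set.univ).toReal := by
  rw [muHat]
  calc |∫ x, walsh k x ∂μ| ≤ ∫ x, |walsh k x| ∂μ := by
        rw [← Real.norm_eq_abs]
        refine (norm_integral_le_integral_norm _).trans ?_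
        simp [Real.norm_eq_abs]
  _ ≤ ∫ x, (1:ℝ) ∂μ := by
      refine integral_mono_of_nonneg (Eventually.of_forall (fun x => abs_nonneg _))
        (integrable_const 1) (Eventually.of_forall (fun x => walsh_abs_le k x))
  _ = (μ Set.univ).toReal := by simp [measureReal_def]

lemma qfun_measurable (s : ℝ) (n : ℕ) : Measurable (qfun lam μ s n) :=
  Finset.measurable_sum _ fun k _ =>
    (measurable_const.mul (walsh_measurable k)).mul measurable_const

lemma Fn_sub_integrable {s : ℝ} (hs : 0 ≤ s) (n : ℕ) (x : G) :
    Integrable (fun y => Fn s n (x - y)) μ := by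
  refine bounded_integrable μ ((Fn_measurable s n).comp (measurable_const.sub measurable_id))
    ((2:ℝ) ^ (s * (n:ℝ))) (fun z => Fn_abs_le hs n _)

lemma integral_Fn_sub {s : ℝ} (hs : 0 ≤ s) (n : ℕ) (x : G) :
    ∫ y, Fn s n (x - y) ∂μ = qfun lam μ s n x := by
  have hptw : ∀ y, Fn s n (x - y)
      = ∑ k ∈ Finset.range (2 ^ n), FnHat s n lam k * walsh k x * walsh k y := by
    intro y
    rw [← fourier_Fn lam hs n (x - y)]
    refine Finset.sum_congr rfl fun k _ => ?_
    rw [G_sub_eq_add, walsh_add, mul_assoc]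
  rw [integral_congr_ae (Eventually.of_forall hptw), integral_finset_sum]
  · refine Finset.sum_congr rfl fun k _ => ?_
    rw [integral_const_mul, muHat]
  · intro k _
    refine bounded_integrable μ (measurable_const.mul (walsh_measurable k))
      (|FnHat s n lam k * walsh k x|) (fun y => ?_)
    rw [abs_mul]
    exact mul_le_of_le_one_right (abs_nonneg _) (walsh_abs_le k y)

lemma qfun_nonneg {s : ℝ} (hs : 0 ≤ s) (n : ℕ) (x : G) : 0 ≤ qfun lam μ s n x := by
  rw [← integral_Fn_sub lam μ hs n x]
  exact integral_nonneg fun y => Fn_nonneg s n _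

lemma lintegral_Fn_sub {s : ℝ} (hs : 0 ≤ s) (n : ℕ) (x : G) :
    ∫⁻ y, ENNReal.ofReal (Fn s n (x - y)) ∂μ = ENNReal.ofReal (qfun lam μ s n x) := by
  rw [← integral_Fn_sub lam μ hs n x]
  exact (ofReal_integral_eq_lintegral_ofReal (Fn_sub_integrable μ hs n x)
    (Eventually.of_forall fun y => Fn_nonneg s n _)).symm

lemma potential_le_iSup {s : ℝ} (hs : 0 ≤ s) (x : G) :
    potential s μ x ≤ ⨆ n, ENNReal.ofReal (qfun lam μ s n x) := by
  have h1 : potential s μ x ≤ ∫⁻ y, ⨆ n, ENNReal.ofReal (Fn s n (x - y)) ∂μ := by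
    rw [potential]
    exact lintegral_mono fun y => ofReal_kernel_le_iSup s (x - y)
  have h2 : ∫⁻ y, ⨆ n, ENNReal.ofReal (Fn s n (x - y)) ∂μ
      = ⨆ n, ∫⁻ y, ENNReal.ofReal (Fn s n (x - y)) ∂μ := by
    refine lintegral_iSup (fun n => ?_) (fun n m hnm y => ?_)
    · exact ((Fn_measurable s n).comp (measurable_const.sub measurable_id)).ennreal_ofReal
    · refine ENNReal.ofReal_le_ofReal ?_
      clear h1
      induction hnm with
      | refl => exact le_refl _
      | step h ih => exact le_trans ih (Fn_mono hs _ _)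
  refine h1.trans (h2.le.trans (iSup_mono fun n => ?_))
  rw [lintegral_Fn_sub lam μ hs n x]

lemma qfun_term_integrable {s : ℝ} (n : ℕ) (k : ℕ) :
    Integrable (fun x => FnHat s n lam k * walsh k x * muHat μ k) μ := by
  refine bounded_integrable μ ((measurable_const.mul (walsh_measurable k)).mul
    measurable_const) (|FnHat s n lam k| * |muHat μ k|) (fun y => ?_)
  rw [abs_mul, abs_mul]
  exact mul_le_mul_of_nonneg_right
    (mul_le_of_le_one_right (abs_nonneg _) (walsh_abs_le k y)) (abs_nonneg _)

lemma qfun_integrable {s : ℝ} (n : ℕ) : Integrable (qfun lam μ s n) μ := by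
  have : qfun lam μ s n = fun x => ∑ k ∈ Finset.range (2 ^ n),
      FnHat s n lam k * walsh k x * muHat μ k := rfl
  rw [this]
  exact integrable_finset_sum _ fun k _ => qfun_term_integrable lam μ n k

lemma integral_qfun {s : ℝ} (hs : 0 ≤ s) (n : ℕ) :
    ∫ x, qfun lam μ s n x ∂μ = ∑ k ∈ Finset.range (2 ^ n), FnHat s n lam k * muHat μ k ^ 2 := by
  simp only [qfun]
  rw [integral_finset_sum]
  · refine Finset.sum_congr rfl fun k _ => ?_
    have : (fun x => FnHat s n lam k * walsh k x * muHat μ k)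
        = fun x => (FnHat s n lam k * muHat μ k) * walsh k x := by
      funext x; ring
    rw [this, integral_const_mul, muHat]
    ring
  · intro k _
    exact qfun_term_integrable lam μ n k

theorem energy_le_ofReal_tsum {s : ℝ} (hs : 0 ≤ s) (hs1 : s < 1)
    (hsum : Summable (fun k : ℕ => phiHat s lam k * (muHat μ k) ^ 2)) :
    energy s μ ≤ ENNReal.ofReal (∑' k, phiHat s lam k * (muHat μ k) ^ 2) := by
  set S := ∑' k, phiHat s lam k * (muHat μ k) ^ 2 with hS
  have hterm : ∀ k, 0 ≤ phiHat s lam k * (muHat μ k) ^ 2 := fun k =>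
    mul_nonneg (phiHat_nonneg lam hs hs1 k) (sq_nonneg _)
  have hpartial : ∀ n, ∑ k ∈ Finset.range (2 ^ n), FnHat s n lam k * muHat μ k ^ 2 ≤ S := by
    intro n
    calc ∑ k ∈ Finset.range (2 ^ n), FnHat s n lam k * muHat μ k ^ 2
        ≤ ∑ k ∈ Finset.range (2 ^ n), phiHat s lam k * muHat μ k ^ 2 := by
          refine Finset.sum_le_sum fun k hk => ?_
          exact mul_le_mul_of_nonneg_right
            (FnHat_le_phiHat lam hs hs1 (Finset.mem_range.1 hk)) (sq_nonneg _)
    _ ≤ S := Summable.sum_le_tsum _ (fun k _ => hterm k) hsum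
  have hq : ∀ n, ∫⁻ x, ENNReal.ofReal (qfun lam μ s n x) ∂μ ≤ ENNReal.ofReal S := by
    intro n
    rw [← ofReal_integral_eq_lintegral_ofReal (qfun_integrable lam μ n)
      (Eventually.of_forall fun x => qfun_nonneg lam μ hs n x)]
    rw [integral_qfun lam μ hs n]
    exact ENNReal.ofReal_le_ofReal (hpartial n)
  calc energy s μ = ∫⁻ x, potential s μ x ∂μ := rfl
  _ ≤ ∫⁻ x, ⨆ n, ENNReal.ofReal (qfun lam μ s n x) ∂μ :=
      lintegral_mono fun x => potential_le_iSup lam μ hs x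
  _ = ⨆ n, ∫⁻ x, ENNReal.ofReal (qfun lam μ s n x) ∂μ := by
      refine lintegral_iSup (fun n => (qfun_measurable lam μ s n).ennreal_ofReal)
        (fun n m hnm x => ?_)
      rw [← lintegral_Fn_sub lam μ hs n x, ← lintegral_Fn_sub lam μ hs m x]
      refine lintegral_mono fun y => ENNReal.ofReal_le_ofReal ?_
      clear hq hpartial
      induction hnm with
      | refl => exact le_refl _
      | step h ih => exact le_trans ih (Fn_mono hs _ _)
  _ ≤ ENNReal.ofReal S := iSup_le hq

end

noncomputable section

lemma rho_term_nonneg (x y : G) (i : ℕ) :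
    0 ≤ (2:ℝ) ^ (-(i:ℝ) - 1) * (if x i = y i then 0 else 1) := by
  have := Real.rpow_pos_of_pos (two_pos) (-(i:ℝ) - 1)
  split <;> nlinarith

lemma rho_nonneg (x y : G) : 0 ≤ rho x y := tsum_nonneg (rho_term_nonneg x y)

lemma rpow_neg_eq_pow (i : ℕ) : (2:ℝ) ^ (-(i:ℝ) - 1) = ((2:ℝ)⁻¹) ^ (i + 1) := by
  have h1 : (-(i:ℝ) - 1) = -(((i+1 : ℕ)):ℝ) := by push_cast; ring
  rw [h1, Real.rpow_neg (by norm_num), Real.rpow_natCast, inv_pow]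

lemma rho_summand_summable (x y : G) :
    Summable (fun i : ℕ => (2:ℝ) ^ (-(i:ℝ) - 1) * (if x i = y i then 0 else 1)) := by
  refine Summable.of_nonneg_of_le (rho_term_nonneg x y) (fun i => ?_) summable_geometric_two
  have h1 : ((2:ℝ)⁻¹) ^ (i+1) ≤ ((2:ℝ)⁻¹) ^ i :=
    pow_le_pow_of_le_one (by norm_num) (by norm_num) (Nat.le_succ i)
  have h2 : ((2:ℝ)⁻¹) ^ (i+1) * (if x i = y i then (0:ℝ) else 1) ≤ ((2:ℝ)⁻¹) ^ (i+1) := by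
    split <;> nlinarith [pow_pos (by norm_num : (0:ℝ) < 2⁻¹) (i+1)]
  calc (2:ℝ) ^ (-(i:ℝ) - 1) * (if x i = y i then (0:ℝ) else 1)
      = ((2:ℝ)⁻¹) ^ (i+1) * (if x i = y i then (0:ℝ) else 1) := by rw [rpow_neg_eq_pow]
  _ ≤ ((2:ℝ)⁻¹) ^ (i+1) := h2
  _ ≤ ((2:ℝ)⁻¹) ^ i := h1
  _ = (1/2:ℝ) ^ i := by norm_num

lemma rho_lt_imp_sub_mem {x y : G} {n : ℕ} (h : rho x y < ((2:ℝ)⁻¹) ^ n) :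
    x - y ∈ Gset n := by
  intro i hi
  by_contra hne
  have hxy : ¬ (x i = y i) := by
    intro hc
    apply hne
    have : (x - y) i = x i - y i := rfl
    rw [this, hc, sub_self]
  have hterm : ((2:ℝ)⁻¹) ^ n ≤ (2:ℝ) ^ (-(i:ℝ) - 1) * (if x i = y i then 0 else 1) := by
    rw [if_neg hxy, mul_one, rpow_neg_eq_pow]
    exact pow_le_pow_of_le_one (by norm_num) (by norm_num) (by omega)
  have hle : (2:ℝ) ^ (-(i:ℝ) - 1) * (if x i = y i then 0 else 1) ≤ rho x y :=
    Summable.le_tsum (rho_summand_summable x y) i (fun j _ => rho_term_nonneg x y j)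
  linarith

lemma ofReal_rho_le_diam {I : Set G} {x y : G} (hx : x ∈ I) (hy : y ∈ I) :
    ENNReal.ofReal (rho x y) ≤ diamRho I := by
  rw [diamRho]
  calc ENNReal.ofReal (rho x y) ≤ ⨆ y' ∈ I, ENNReal.ofReal (rho x y') :=
        le_biSup (fun y' => ENNReal.ofReal (rho x y')) hy
  _ ≤ ⨆ x' ∈ I, ⨆ y' ∈ I, ENNReal.ofReal (rho x' y') :=
        le_biSup (fun x' => ⨆ y' ∈ I, ENNReal.ofReal (rho x' y')) hx

lemma Kset_measurable (n : ℕ) (x : G) : MeasurableSet (Kset n x) := by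
  have : Kset n x = (fun y : G => x - y) ⁻¹' (Gset n) := rfl
  rw [this]
  exact (measurable_const.sub measurable_id) (Gset_measurable n)

variable (μ : Measure G) [IsFiniteMeasure μ]

lemma potential_ge {s : ℝ} (hs : 0 ≤ s) (n : ℕ) (x : G) (hna : ∀ z : G, μ {z} = 0) :
    ENNReal.ofReal ((2:ℝ) ^ (s * (n:ℝ))) * μ (Kset n x) ≤ potential s μ x := by
  have hA : MeasurableSet (Kset n x \ {x}) :=
    (Kset_measurable n x).diff (MeasurableSet.singleton x)
  have h1 : ENNReal.ofReal ((2:ℝ) ^ (s * (n:ℝ))) * μ (Kset n x \ {x})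
      ≤ ∫⁻ y in Kset n x \ {x}, ENNReal.ofReal (kernel s (x - y)) ∂μ := by
    rw [← setLIntegral_const]
    refine setLIntegral_mono ((kernel_measurable s).comp
      (measurable_const.sub measurable_id)).ennreal_ofReal (fun y hy => ?_)
    refine ENNReal.ofReal_le_ofReal ?_
    refine kernel_ge_on_Gset hs hy.1 ?_
    intro hc
    have : x = y := by
      have := sub_eq_zero.1 hc
      exact this
    exact hy.2 (by rw [Set.mem_singleton_iff, ← this])
  have h2 : μ (Kset n x \ {x}) = μ (Kset n x) := by
    refine le_antisymm (measure_mono Set.diff_subset) ?_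
    calc μ (Kset n x) ≤ μ (Kset n x \ {x}) + μ ({x} : Set G) := by
          refine (measure_mono ?_).trans (measure_union_le _ _)
          intro y hy
          by_cases hyx : y = x
          · exact Or.inr (hyx ▸ rfl)
          · exact Or.inl ⟨hy, hyx⟩
    _ = μ (Kset n x \ {x}) := by rw [hna x, add_zero]
  rw [← h2]
  refine h1.trans ?_
  rw [potential]
  exact setLIntegral_le_lintegral _ _

lemma potential_measurable (s : ℝ) : Measurable (potential s μ) := by
  have hj : Measurable (fun p : G × G => ENNReal.ofReal (kernel s (p.1 - p.2))) :=
    ((kernel_measurable s).comp (measurable_fst.sub measurable_snd)).ennreal_ofReal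
  exact hj.lintegral_prod_right'

lemma exists_M (hμ0 : μ ≠ 0) {s : ℝ} (henergy : energy s μ ≠ ⊤) :
    ∃ M : ℕ, 1 ≤ M ∧ 0 < μ {x | potential s μ x ≤ (M:ℝ≥0∞)} := by
  have hae : ∀ᵐ x ∂μ, potential s μ x < ⊤ :=
    ae_lt_top (potential_measurable μ s) henergy
  by_contra hc
  push_neg at hc
  have hzero : ∀ M : ℕ, μ {x | potential s μ x ≤ (M:ℝ≥0∞)} = 0 := by
    intro M
    have h1 : {x | potential s μ x ≤ (M:ℝ≥0∞)} ⊆ {x | potential s μ x ≤ ((M+1:ℕ):ℝ≥0∞)} := by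
      intro x hx
      exact le_trans hx ((Nat.cast_le (α := ℝ≥0∞)).2 (Nat.le_succ M))
    have hMz : μ {x | potential s μ x ≤ ((M+1:ℕ):ℝ≥0∞)} = 0 :=
      le_antisymm (hc (M+1) (by omega)) zero_le
    exact measure_mono_null h1 hMz
  have hcover : {x | potential s μ x < ⊤} ⊆ ⋃ M : ℕ, {x | potential s μ x ≤ (M:ℝ≥0∞)} := by
    intro x hx
    obtain ⟨M, hM⟩ := ENNReal.exists_nat_gt (ne_of_lt hx)
    exact Set.mem_iUnion.2 ⟨M, le_of_lt hM⟩
  have h3 : μ {x | potential s μ x < ⊤} = 0 := by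
    refine measure_mono_null hcover ?_
    exact measure_iUnion_null (fun M => hzero M)
  have h4 : μ Set.univ = 0 := by
    have : (Set.univ : Set G) ⊆ {x | potential s μ x < ⊤} ∪ {x | ¬ potential s μ x < ⊤} := by
      intro x _
      by_cases h : potential s μ x < ⊤
      · exact Or.inl h
      · exact Or.inr h
    refine measure_mono_null this ?_
    refine measure_union_null h3 ?_
    exact ae_iff.1 hae
  exact absurd (Measure.measure_univ_eq_zero.1 h4) hμ0

end

noncomputable section

def Dd (n : ℕ) : ℝ≥0∞ := ((2:ℝ≥0∞)⁻¹) ^ n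

lemma Dd_pos (n : ℕ) : 0 < Dd n := by
  rw [Dd]
  exact pos_iff_ne_zero.2 (pow_ne_zero n (ENNReal.inv_ne_zero.2 (by norm_num)))

lemma Dd_ne_top (n : ℕ) : Dd n ≠ ⊤ := by
  rw [Dd]
  exact (ENNReal.pow_ne_top (by norm_num))

lemma Dd_le_one (n : ℕ) : Dd n ≤ 1 :=
  pow_le_one' (by norm_num) n

lemma Dd_eq_ofReal (n : ℕ) : Dd n = ENNReal.ofReal (((2:ℝ)⁻¹) ^ n) := by
  rw [Dd, ENNReal.ofReal_pow (by norm_num), ENNReal.ofReal_inv_of_pos two_pos]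
  norm_num

lemma Dd_rpow {u : ℝ} (hu : 0 ≤ u) (n : ℕ) :
    (Dd n) ^ u = (ENNReal.ofReal ((2:ℝ) ^ (u * (n:ℝ))))⁻¹ := by
  rw [Dd_eq_ofReal, ENNReal.ofReal_rpow_of_pos (by positivity),
    ← ENNReal.ofReal_inv_of_pos (by positivity)]
  congr 1
  have h1 : ((2:ℝ)⁻¹) ^ n = (2:ℝ) ^ (-(n:ℝ)) := by
    rw [Real.rpow_neg (by norm_num), Real.rpow_natCast, inv_pow]
  rw [h1, ← Real.rpow_mul (by norm_num), ← Real.rpow_neg (by norm_num)]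
  congr 1
  ring

lemma Dd_rpow_pow (u : ℝ) (n : ℕ) : (Dd n) ^ u = ((2:ℝ≥0∞)⁻¹ ^ u) ^ n := by
  rw [Dd, ← ENNReal.rpow_natCast ((2:ℝ≥0∞)⁻¹) n, ← ENNReal.rpow_mul,
    mul_comm, ENNReal.rpow_mul, ENNReal.rpow_natCast]

lemma Dd_pred {n : ℕ} (hn : n ≠ 0) : Dd (n - 1) = Dd n * 2 := by
  have h : n = (n-1) + 1 := by omega
  rw [h, Dd, Dd, pow_succ, mul_assoc, ENNReal.inv_mul_cancel (by norm_num) (by norm_num),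
    mul_one]
  rw [← h]

variable (μ : Measure G) [IsFiniteMeasure μ]

/-- mass distribution bound on small sets -/
lemma mass_bound {s : ℝ} (hs : 0 ≤ s) (hna : ∀ z : G, μ {z} = 0) (M : ℕ)
    (A : Set G) (hA : ∀ x ∈ A, potential s μ x ≤ (M:ℝ≥0∞))
    (I : Set G) (n : ℕ) (hd : diamRho I < Dd n) :
    μ (I ∩ A) ≤ (M:ℝ≥0∞) * (Dd n) ^ s := by
  rcases Set.eq_empty_or_nonempty (I ∩ A) with hIA | ⟨x, hxI, hxA⟩
  · rw [hIA, measure_empty]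
    exact zero_le
  have hsub : I ⊆ Kset n x := by
    intro y hy
    have h1 : ENNReal.ofReal (rho x y) < Dd n := lt_of_le_of_lt (ofReal_rho_le_diam hxI hy) hd
    rw [Dd_eq_ofReal] at h1
    have h2 : rho x y < ((2:ℝ)⁻¹) ^ n := by
      have := (ENNReal.ofReal_lt_ofReal_iff (by positivity)).1 h1
      exact this
    exact rho_lt_imp_sub_mem h2
  have hpot : ENNReal.ofReal ((2:ℝ) ^ (s * (n:ℝ))) * μ (Kset n x) ≤ (M:ℝ≥0∞) :=
    le_trans (potential_ge μ hs n x hna) (hA x hxA)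
  set c := ENNReal.ofReal ((2:ℝ) ^ (s * (n:ℝ))) with hc
  have hc0 : c ≠ 0 := by
    rw [hc]
    simp only [ne_eq, ENNReal.ofReal_eq_zero, not_le]
    positivity
  have hct : c ≠ ⊤ := ENNReal.ofReal_ne_top
  have hK : μ (Kset n x) ≤ (M:ℝ≥0∞) * c⁻¹ := by
    calc μ (Kset n x) = c⁻¹ * (c * μ (Kset n x)) := by
          rw [← mul_assoc, ENNReal.inv_mul_cancel hc0 hct, one_mul]
    _ ≤ c⁻¹ * (M:ℝ≥0∞) := mul_le_mul_right hpot _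
    _ = (M:ℝ≥0∞) * c⁻¹ := mul_comm _ _
  rw [Dd_rpow hs n, ← hc]
  exact le_trans (measure_mono (Set.inter_subset_left.trans hsub)) hK

lemma tendsto_MDd {u : ℝ} (hu : 0 < u) (C : ℝ≥0∞) (hC : C ≠ ⊤) :
    Tendsto (fun n : ℕ => C * (Dd n) ^ u) atTop (𝓝 0) := by
  have hbase : (2:ℝ≥0∞)⁻¹ ^ u < 1 := by
    refine ENNReal.rpow_lt_one ?_ hu
    rw [ENNReal.inv_lt_one]
    norm_num
  have h1 : Tendsto (fun n : ℕ => ((2:ℝ≥0∞)⁻¹ ^ u) ^ n) atTop (𝓝 0) :=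
    ENNReal.tendsto_pow_atTop_nhds_zero_of_lt_one hbase
  have h2 : Tendsto (fun n : ℕ => C * ((2:ℝ≥0∞)⁻¹ ^ u) ^ n) atTop (𝓝 (C * 0)) :=
    ENNReal.Tendsto.const_mul h1 (Or.inr hC)
  rw [mul_zero] at h2
  refine h2.congr fun n => ?_
  rw [Dd_rpow_pow]

/-- the per-set estimate used in the covering argument -/
lemma cover_bound {s t : ℝ} (hs : 0 ≤ s) (hs1 : s ≤ 1) (ht : 0 < t) (hts : t < s)
    (hna : ∀ z : G, μ {z} = 0) (M : ℕ)
    (A : Set G) (hA : ∀ x ∈ A, potential s μ x ≤ (M:ℝ≥0∞))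
    (I : Set G) (m : ℕ) (hd : diamRho I < Dd m) :
    μ (I ∩ A) ≤ 2 * (M:ℝ≥0∞) * (Dd m) ^ (s - t) * diamRho I ^ t := by
  set d := diamRho I with hdd
  by_cases hd0 : d = 0
  · have hz : μ (I ∩ A) = 0 := by
      have hall : ∀ n : ℕ, μ (I ∩ A) ≤ (M:ℝ≥0∞) * (Dd n) ^ s := by
        intro n
        refine mass_bound μ hs hna M A hA I n ?_
        rw [← hdd, hd0]
        exact Dd_pos n
      have htd : Tendsto (fun n : ℕ => (M:ℝ≥0∞) * (Dd n) ^ s) atTop (𝓝 0) :=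
        tendsto_MDd (lt_trans ht hts) _ (by simp)
      exact le_antisymm (ge_of_tendsto htd (Eventually.of_forall hall)) zero_le
    rw [hz]
    exact zero_le
  · -- d > 0 case
    have hdtop : d ≠ ⊤ := ne_top_of_lt (lt_of_lt_of_le hd (Dd_le_one m))
    have hex : ∃ n, Dd n ≤ d := by
      have htd : Tendsto (fun n : ℕ => Dd n) atTop (𝓝 0) := by
        have := tendsto_MDd one_pos (1:ℝ≥0∞) (by norm_num)
        refine this.congr fun n => ?_
        rw [one_mul, ENNReal.rpow_one]
      have := htd.eventually (gt_mem_nhds (pos_iff_ne_zero.2 hd0))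
      obtain ⟨n, hn⟩ := this.exists
      exact ⟨n, le_of_lt hn⟩
    set n0 := Nat.find hex with hn0
    have hfind : Dd n0 ≤ d := Nat.find_spec hex
    have hn0pos : n0 ≠ 0 := by
      intro hc
      have h1 : Dd 0 = 1 := by rw [Dd, pow_zero]
      rw [hc, h1] at hfind
      have : d < 1 := lt_of_lt_of_le hd (Dd_le_one m)
      exact absurd hfind (not_le.2 this)
    have hpred : d < Dd (n0 - 1) := by
      have := Nat.find_min hex (m := n0 - 1) (by omega)
      exact lt_of_not_ge this
    have hstep1 : μ (I ∩ A) ≤ (M:ℝ≥0∞) * (Dd (n0-1)) ^ s :=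
      mass_bound μ hs hna M A hA I (n0-1) hpred
    have hstep2 : (Dd (n0-1)) ^ s ≤ 2 * d ^ s := by
      rw [Dd_pred hn0pos, ENNReal.mul_rpow_of_ne_top (Dd_ne_top n0) (by norm_num)]
      have h2s : (2:ℝ≥0∞) ^ s ≤ 2 := by
        calc (2:ℝ≥0∞) ^ s ≤ (2:ℝ≥0∞) ^ (1:ℝ) :=
              ENNReal.rpow_le_rpow_of_exponent_le (by norm_num) hs1
        _ = 2 := ENNReal.rpow_one 2
      have hds : (Dd n0) ^ s ≤ d ^ s := ENNReal.rpow_le_rpow hfind hs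
      calc (Dd n0) ^ s * (2:ℝ≥0∞) ^ s ≤ d ^ s * 2 := mul_le_mul' hds h2s
      _ = 2 * d ^ s := mul_comm _ _
    have hstep3 : d ^ s ≤ d ^ t * (Dd m) ^ (s - t) := by
      have h1 : d ^ s = d ^ t * d ^ (s - t) := by
        rw [← ENNReal.rpow_add t (s-t) hd0 hdtop]
        congr 1
        ring
      rw [h1]
      refine mul_le_mul_right ?_ _
      exact ENNReal.rpow_le_rpow (le_of_lt hd) (by linarith)
    calc μ (I ∩ A) ≤ (M:ℝ≥0∞) * (Dd (n0-1)) ^ s := hstep1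
    _ ≤ (M:ℝ≥0∞) * (2 * d ^ s) := mul_le_mul_right hstep2 _
    _ ≤ (M:ℝ≥0∞) * (2 * (d ^ t * (Dd m) ^ (s - t))) := by
        refine mul_le_mul_right (mul_le_mul_right hstep3 _) _
    _ = 2 * (M:ℝ≥0∞) * (Dd m) ^ (s - t) * d ^ t := by ring

end

noncomputable section

variable (μ : Measure G) [IsFiniteMeasure μ]

lemma Hmeas_top {s t : ℝ} (hs : 0 ≤ s) (hs1 : s ≤ 1) (ht : 0 < t) (hts : t < s)
    (hna : ∀ z : G, μ {z} = 0) (M : ℕ) (hM : 1 ≤ M)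
    (E : Set G) (hsupp : μ Eᶜ = 0)
    (A : Set G) (hA : ∀ x ∈ A, potential s μ x ≤ (M:ℝ≥0∞)) (hApos : 0 < μ A) :
    Hmeas t E = ⊤ := by
  set Q : ℕ → ℝ≥0∞ := fun m => 2 * (M:ℝ≥0∞) * (Dd m) ^ (s - t) with hQ
  have hQ0 : ∀ m, Q m ≠ 0 := by
    intro m
    rw [hQ]
    refine mul_ne_zero (mul_ne_zero (by norm_num) ?_) ?_
    · exact (Nat.cast_pos (α := ℝ≥0∞) |>.2 (by omega)).ne'
    · exact (ENNReal.rpow_pos (Dd_pos m) (Dd_ne_top m)).ne'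
  have hQt : ∀ m, Q m ≠ ⊤ := by
    intro m
    rw [hQ]
    refine ENNReal.mul_ne_top (ENNReal.mul_ne_top (by norm_num) (ENNReal.natCast_ne_top M)) ?_
    exact ENNReal.rpow_ne_top_of_nonneg (by linarith) (Dd_ne_top m)
  have key : ∀ m (I : ℕ → Set G), E ⊆ (⋃ i, I i) → (∀ i, diamRho (I i) < Dd m) →
      μ A ≤ Q m * ∑' i, diamRho (I i) ^ t := by
    intro m I hcov hdiam
    have h1 : μ A ≤ μ (A ∩ E) := by
      calc μ A ≤ μ (A ∩ E) + μ (A ∩ Eᶜ) := by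
            refine (measure_mono ?_).trans (measure_union_le _ _)
            intro x hx
            by_cases hE : x ∈ E
            · exact Or.inl ⟨hx, hE⟩
            · exact Or.inr ⟨hx, hE⟩
      _ = μ (A ∩ E) := by
            rw [measure_mono_null (Set.inter_subset_right) hsupp, add_zero]
    have h2 : μ (A ∩ E) ≤ ∑' i, μ (I i ∩ A) := by
      calc μ (A ∩ E) ≤ μ (⋃ i, I i ∩ A) := by
            refine measure_mono ?_
            intro x hx
            obtain ⟨i, hi⟩ := Set.mem_iUnion.1 (hcov hx.2)
            exact Set.mem_iUnion.2 ⟨i, hi, hx.1⟩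
      _ ≤ ∑' i, μ (I i ∩ A) := measure_iUnion_le _
    have h3 : ∑' i, μ (I i ∩ A) ≤ Q m * ∑' i, diamRho (I i) ^ t := by
      rw [← ENNReal.tsum_mul_left]
      refine ENNReal.tsum_le_tsum fun i => ?_
      exact cover_bound μ hs hs1 ht hts hna M A hA (I i) m (hdiam i)
    exact h1.trans (h2.trans h3)
  refine ENNReal.eq_top_of_forall_nnreal_le fun r => ?_
  have htend : Tendsto (fun m : ℕ => (r:ℝ≥0∞) * Q m) atTop (𝓝 0) := by
    have h0 := tendsto_MDd (by linarith : (0:ℝ) < s - t)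
      ((r:ℝ≥0∞) * (2 * (M:ℝ≥0∞)))
      (ENNReal.mul_ne_top ENNReal.coe_ne_top
        (ENNReal.mul_ne_top (by norm_num) (ENNReal.natCast_ne_top M)))
    refine h0.congr fun m => ?_
    rw [hQ]
    ring
  obtain ⟨m, hm⟩ := (htend.eventually (gt_mem_nhds hApos)).exists
  have h1 : (r:ℝ≥0∞) ≤ Hdelta t (Dd m) E := by
    rw [Hdelta]
    refine le_iInf fun I => le_iInf fun hcov => le_iInf fun hdiam => ?_
    have hμA := key m I hcov hdiam
    have h2 : (r:ℝ≥0∞) * Q m ≤ (∑' i, diamRho (I i) ^ t) * Q m := by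
      refine hm.le.trans ?_
      rw [mul_comm]
      exact hμA
    exact (ENNReal.mul_le_mul_iff_left (hQ0 m) (hQt m)).1 h2
  refine h1.trans ?_
  rw [Hmeas]
  exact le_iSup₂_of_le (Dd m) (Dd_pos m) (le_refl _)

lemma dim_ge {s : ℝ} (hs0 : 0 < s) (E : Set G)
    (H : ∀ t : ℝ, 0 < t → t < s → Hmeas t E = ⊤) :
    ENNReal.ofReal s ≤ hdimRho E := by
  refine le_of_forall_lt fun c hc => ?_
  have hcne : c ≠ ⊤ := ne_top_of_lt hc
  have hct : c.toReal < s := (ENNReal.lt_ofReal_iff_toReal_lt hcne).1 hc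
  set t := (max c.toReal 0 + s) / 2 with hT
  have hmax : max c.toReal 0 < s := max_lt hct hs0
  have h1 : c.toReal < t := by
    have := le_max_left c.toReal 0
    rw [hT]
    linarith
  have ht0 : 0 < t := by
    have := le_max_right c.toReal 0
    rw [hT]
    linarith
  have hts : t < s := by
    rw [hT]
    linarith
  have hH := H t ht0 hts
  have h2 : c < ENNReal.ofReal t := (ENNReal.lt_ofReal_iff_toReal_lt hcne).2 h1
  refine lt_of_lt_of_le h2 ?_
  rw [hdimRho]
  exact le_iSup₂_of_le t hH (le_refl _)

end


/-- If a nonzero finite nonatomic measure on E makes Σ \hatφ_s(k)(\hatμ(k))² converge,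
then the Hausdorff dimension of E is at least s. -/
theorem stmt17 (s : ℝ) (hs : 0 < s) (hs1 : s < 1)
    (lam : Measure G) [IsProbabilityMeasure lam] [lam.IsAddLeftInvariant]
    (E : Set G) (hE : MeasurableSet E)
    (μ : Measure G) [IsFiniteMeasure μ] (hμ0 : μ ≠ 0) (hna : ∀ x : G, μ {x} = 0)
    (hsupp : μ Eᶜ = 0)
    (hsum : Summable (fun k : ℕ => phiHat s lam k * (muHat μ k) ^ 2)) :
    ENNReal.ofReal s ≤ hdimRho E := by
  have hs0 : (0:ℝ) ≤ s := le_of_lt hs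
  have hen : energy s μ ≤ ENNReal.ofReal (∑' k, phiHat s lam k * (muHat μ k) ^ 2) :=
    energy_le_ofReal_tsum lam μ hs0 hs1 hsum
  have hentop : energy s μ ≠ ⊤ := ne_top_of_le_ne_top ENNReal.ofReal_ne_top hen
  obtain ⟨M, hM1, hApos⟩ := exists_M μ hμ0 hentop
  refine dim_ge hs E (fun t ht0 hts => ?_)
  exact Hmeas_top μ hs0 (le_of_lt hs1) ht0 hts hna M hM1 E hsupp
    {x | potential s μ x ≤ (M:ℝ≥0∞)} (fun x hx => hx) hApos
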